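/- For bi-periodic Fibonacci polynomials and m, n ≥ 1 with m + n even, q_{m+n}(x) = q_{m+1}(x) q_n(x) + q_m(x) q_{n−1}(x). -/
import Mathlib


/-- Bi-periodic Fibonacci polynomials (evaluated at x): q 0 = 0, q 1 = 1,
    q n = a*x*q (n-1) + q (n-2) if n odd, q n = b*x*q (n-1) + q (n-2) if n even. -/
def bpFibP (a b x : ℝ) : ℕ → ℝ
  | 0 => 0
  | 1 => 1
  | n + 2 => (if Even (n + 2) then b * x else a * x) * bpFibP a b x (n + 1) + bpFibP a b x n

lemma bpFibP_rec (a b x : ℝ) (k : ℕ) :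
    bpFibP a b x (k + 2) =
      (if Even (k + 2) then b * x else a * x) * bpFibP a b x (k + 1) + bpFibP a b x k := rfl


lemma bpq0 (a b x : ℝ) : bpFibP a b x 0 = 0 := rfl
lemma bpq1 (a b x : ℝ) : bpFibP a b x 1 = 1 := rfl
lemma bpq2 (a b x : ℝ) : bpFibP a b x 2 = b * x := by
  rw [show (2:ℕ) = 0 + 2 from rfl, bpFibP_rec, if_pos (by decide : Even (0 + 2)), bpq1, bpq0]
  ring
lemma bpq3 (a b x : ℝ) : bpFibP a b x 3 = a * x * (b * x) + 1 := by
  rw [show (3:ℕ) = 1 + 2 from rfl, bpFibP_rec, if_neg (by decide : ¬ Even (1 + 2)),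
    show (1:ℕ) + 1 = 2 from rfl, bpq2, bpq1]
lemma bpq4 (a b x : ℝ) : bpFibP a b x 4 = b * x * (a * x * (b * x) + 1) + b * x := by
  rw [show (4:ℕ) = 2 + 2 from rfl, bpFibP_rec, if_pos (by decide : Even (2 + 2)),
    show (2:ℕ) + 1 = 3 from rfl, bpq3, bpq2]

/-- Two-step recurrence with constant coefficient. -/
lemma bpFibP_step2 (a b x : ℝ) (k : ℕ) :
    bpFibP a b x (k + 4) = (a * b * x ^ 2 + 2) * bpFibP a b x (k + 2) - bpFibP a b x k := by
  have h4 := bpFibP_rec a b x (k + 2)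
  have h3 := bpFibP_rec a b x (k + 1)
  have h2 := bpFibP_rec a b x k
  rcases Nat.even_or_odd k with hk | hk
  · have e2 : Even (k + 2) := by rw [Nat.even_iff] at *; omega
    have e4 : Even (k + 2 + 2) := by rw [Nat.even_iff] at *; omega
    have o3 : ¬ Even (k + 1 + 2) := by rw [Nat.even_iff] at *; omega
    rw [if_pos e4] at h4; rw [if_neg o3] at h3; rw [if_pos e2] at h2
    have : k + 2 + 2 = k + 4 := by omega
    rw [this] at h4
    have : k + 1 + 2 = k + 3 := by omega
    rw [this] at h3
    have : k + 1 + 1 = k + 2 := by omega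
    rw [this] at h3
    rw [h4, h3, h2]; ring
  · have e2 : ¬ Even (k + 2) := by rw [Nat.even_iff, Nat.odd_iff] at *; omega
    have e4 : ¬ Even (k + 2 + 2) := by rw [Nat.even_iff, Nat.odd_iff] at *; omega
    have o3 : Even (k + 1 + 2) := by rw [Nat.even_iff, Nat.odd_iff] at *; omega
    rw [if_neg e4] at h4; rw [if_pos o3] at h3; rw [if_neg e2] at h2
    have : k + 2 + 2 = k + 4 := by omega
    rw [this] at h4
    have : k + 1 + 2 = k + 3 := by omega
    rw [this] at h3
    have : k + 1 + 1 = k + 2 := by omega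
    rw [this] at h3
    rw [h4, h3, h2]; ring

lemma bpFibP_key (a b x : ℝ) : ∀ n m : ℕ, 1 ≤ m → 1 ≤ n → Even (m + n) →
    bpFibP a b x (m + n) =
      bpFibP a b x (m + 1) * bpFibP a b x n + bpFibP a b x m * bpFibP a b x (n - 1) := by
  intro n
  induction n using Nat.strong_induction_on with
  | _ n ih =>
    match n with
    | 0 => intro m hm hn h; omega
    | 1 =>
      intro m hm hn h
      simp [bpq1, bpq0]
    | 2 =>
      intro m hm hn h
      obtain ⟨k, hk⟩ : ∃ k, m = k + 2 := by
        rw [Nat.even_iff] at h; exact ⟨m - 2, by omega⟩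
      subst hk
      have e : Even (k + 2 + 2) := by rw [Nat.even_iff] at *; omega
      rw [bpFibP_rec a b x (k + 2), if_pos e, bpq2, bpq1]
      ring
    | 3 =>
      intro m hm hn h
      have e3 : Even (m + 3) := h
      have e2 : ¬ Even (m + 1 + 1) := by rw [Nat.even_iff] at *; omega
      obtain ⟨k, hk⟩ : ∃ k, m = k + 1 := ⟨m - 1, by omega⟩
      subst hk
      have h3 := bpFibP_rec a b x (k + 2)
      have h2 := bpFibP_rec a b x (k + 1)
      rw [if_pos (by rw [Nat.even_iff] at *; omega : Even (k + 2 + 2))] at h3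
      rw [if_neg (by rw [Nat.even_iff] at *; omega : ¬ Even (k + 1 + 2))] at h2
      rw [show k + 1 + 3 = k + 2 + 2 from rfl, show k + 1 + 1 = k + 2 from rfl]
      rw [h3, show k + 2 + 1 = k + 1 + 2 from rfl, h2]
      simp only [show k + 1 + 1 = k + 2 from rfl]
      rw [bpq3, bpq2]
      ring
    | 4 =>
      intro m hm hn h
      have e2 : Even (m + 2) := by rw [Nat.even_iff] at *; omega
      have s := bpFibP_step2 a b x m
      have h2 := bpFibP_rec a b x m
      rw [if_pos e2] at h2
      rw [s, h2, bpq4, show (4:ℕ) - 1 = 3 from rfl, bpq3]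
      ring
    | (k + 5) =>
      intro m hm hn h
      have h3 : Even (m + (k + 3)) := by rw [Nat.even_iff] at *; omega
      have h1 : Even (m + (k + 1)) := by rw [Nat.even_iff] at *; omega
      have ih3 := ih (k + 3) (by omega) m hm (by omega) h3
      have ih1 := ih (k + 1) (by omega) m hm (by omega) h1
      have sL := bpFibP_step2 a b x (m + k + 1)
      have sR := bpFibP_step2 a b x (k + 1)
      have sR' := bpFibP_step2 a b x k
      rw [show m + (k + 5) = m + k + 1 + 4 from by omega, sL,
        show m + k + 1 + 2 = m + (k + 3) from by omega, ih3,
        show m + k + 1 = m + (k + 1) from by omega, ih1]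
      rw [show k + 1 + 4 = k + 5 from rfl, show k + 1 + 2 = k + 3 from rfl] at sR
      rw [show k + 4 = k + 2 + 2 from rfl] at sR'
      rw [sR, show k + 5 - 1 = k + 4 from rfl, show k + 4 = k + 2 + 2 from rfl, sR',
        show k + 3 - 1 = k + 2 from rfl, show k + 1 - 1 = k from rfl]
      ring

theorem bpFibP_add_even (a b x : ℝ) (ha : a ≠ 0) (hb : b ≠ 0) (m n : ℕ)
    (hm : 1 ≤ m) (hn : 1 ≤ n) (h : Even (m + n)) :
    bpFibP a b x (m + n) =
      bpFibP a b x (m + 1) * bpFibP a b x n + bpFibP a b x m * bpFibP a b x (n - 1) := by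
  exact bpFibP_key a b x n m hm hn h
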